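/- For a closed proper convex function f : ℝ^m → (−∞, +∞] and t > 0, the Moreau–Yosida envelope E_f^t(x) := min_y { f(y) + (1/(2t))‖y − x‖² } is convex and continuously differentiable, with ∇E_f^t(x) = (x − Prox_{tf}(x))/t. -/

import Mathlib

open RealInnerProductSpace

section aux

variable {m : ℕ}

/-- subgradient inequality for the prox point -/
theorem prox_subgrad (f : EuclideanSpace ℝ (Fin m) → ℝ)
    (hconv : ConvexOn ℝ Set.univ f) (t : ℝ) (ht : 0 < t)
    (x p : EuclideanSpace ℝ (Fin m))
    (hp : IsMinOn (fun y => f y + (1 / (2 * t)) * ‖y - x‖ ^ 2) Set.univ p)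
    (y : EuclideanSpace ℝ (Fin m)) :
    f p + (1 / t) * ⟪x - p, y - p⟫ ≤ f y := by
  have key : ∀ l : ℝ, 0 < l → l ≤ 1 →
      f p - f y - (1 / t) * ⟪p - x, y - p⟫ ≤ l * ((1 / (2 * t)) * ‖y - p‖ ^ 2) := by
    intro l hl hl1
    have hmin := hp (Set.mem_univ (p + l • (y - p)))
    simp only [Set.mem_univ] at hmin
    have hcvx : f (p + l • (y - p)) ≤ (1 - l) * f p + l * f y := by
      have := hconv.2 (Set.mem_univ p) (Set.mem_univ y)
        (by linarith : (0:ℝ) ≤ 1 - l) (le_of_lt hl) (by ring)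
      have heq : (1 - l) • p + l • y = p + l • (y - p) := by module
      rwa [heq] at this
    have hnorm : ‖p + l • (y - p) - x‖ ^ 2
        = ‖p - x‖ ^ 2 + 2 * (l * ⟪p - x, y - p⟫) + l ^ 2 * ‖y - p‖ ^ 2 := by
      have h1 : p + l • (y - p) - x = (p - x) + l • (y - p) := by module
      rw [h1, norm_add_sq_real, real_inner_smul_right, norm_smul]
      simp only [Real.norm_eq_abs, abs_of_pos hl, mul_pow]
    have hF : f p + (1 / (2 * t)) * ‖p - x‖ ^ 2
        ≤ f (p + l • (y - p)) + (1 / (2 * t)) * ‖p + l • (y - p) - x‖ ^ 2 := hmin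
    rw [hnorm] at hF
    have ht' : 0 < 1 / (2 * t) := by positivity
    have hy2 : (0:ℝ) ≤ ‖y - p‖ ^ 2 := by positivity
    have hstep : l * (f p - f y) ≤
        (1 / (2 * t)) * (2 * (l * ⟪p - x, y - p⟫) + l ^ 2 * ‖y - p‖ ^ 2) := by
      nlinarith [hF, hcvx]
    refine (mul_le_mul_iff_right₀ hl).mp ?_
    calc l * (f p - f y - (1 / t) * ⟪p - x, y - p⟫)
        = l * (f p - f y) - (1/(2*t)) * (2 * (l * ⟪p - x, y - p⟫)) := by
          field_simp
      _ ≤ (1 / (2 * t)) * (l ^ 2 * ‖y - p‖ ^ 2) := by linarith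
      _ ≤ l * (l * ((1 / (2 * t)) * ‖y - p‖ ^ 2)) := by nlinarith
  have hmain : f p - f y - (1 / t) * ⟪p - x, y - p⟫ ≤ 0 := by
    set a := f p - f y - (1 / t) * ⟪p - x, y - p⟫ with ha
    set C := (1 / (2 * t)) * ‖y - p‖ ^ 2 with hC
    have hC0 : 0 ≤ C := by positivity
    refine le_of_forall_pos_le_add fun ε hε => ?_
    rcases eq_or_lt_of_le hC0 with h | h
    · have := key 1 one_pos le_rfl
      linarith
    · have hl : 0 < min 1 (ε / C) := lt_min one_pos (by positivity)
      have h1 := key _ hl (min_le_left _ _)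
      have h2 : min 1 (ε / C) * C ≤ (ε / C) * C :=
        mul_le_mul_of_nonneg_right (min_le_right _ _) hC0
      have h3 : (ε / C) * C = ε := by field_simp
      have h4 : a ≤ ε := by
        calc a ≤ min 1 (ε / C) * C := h1
          _ ≤ (ε / C) * C := h2
          _ = ε := h3
      linarith
  have hinner : ⟪x - p, y - p⟫ = - ⟪p - x, y - p⟫ := by
    rw [← inner_neg_left]; congr 1; module
  rw [hinner]; linarith

end aux

set_option maxHeartbeats 1000000 in
/-- The Moreau–Yosida envelope `E_f^t` of a closed proper convex function `f` is
convex and continuously differentiable, with `∇E_f^t(x) = (x − Prox_{tf}(x))/t`. -/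
theorem moreau_envelope_gradient (m : ℕ) (f : EuclideanSpace ℝ (Fin m) → ℝ)
    (hconv : ConvexOn ℝ Set.univ f) (hlsc : LowerSemicontinuous f)
    (t : ℝ) (ht : 0 < t)
    (prox : EuclideanSpace ℝ (Fin m) → EuclideanSpace ℝ (Fin m))
    (hprox : ∀ x, IsMinOn (fun y => f y + (1 / (2 * t)) * ‖y - x‖ ^ 2) Set.univ (prox x))
    (env : EuclideanSpace ℝ (Fin m) → ℝ)
    (henv : ∀ x, env x = f (prox x) + (1 / (2 * t)) * ‖prox x - x‖ ^ 2) :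
    ConvexOn ℝ Set.univ env ∧
      (∀ x, HasGradientAt env ((1 / t) • (x - prox x)) x) ∧
      Continuous fun x => (1 / t) • (x - prox x) := by
  have hsub : ∀ x y, f (prox x) + (1 / t) * ⟪x - prox x, y - prox x⟫ ≤ f y :=
    fun x y => prox_subgrad f hconv t ht x (prox x) (hprox x) y
  have ht' : 0 < 1 / t := by positivity
  -- firm nonexpansiveness
  have hfirm : ∀ x y, ‖prox x - prox y‖ ^ 2 ≤ ⟪x - y, prox x - prox y⟫ := by
    intro x y
    have h1 := hsub x (prox y)
    have h2 := hsub y (prox x)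
    have hAB : ⟪x - prox x, prox y - prox x⟫ + ⟪y - prox y, prox x - prox y⟫ ≤ 0 := by
      nlinarith [h1, h2]
    have e1 : ⟪x - prox x, prox y - prox x⟫ = - ⟪x - prox x, prox x - prox y⟫ := by
      rw [← inner_neg_right]; congr 1; module
    have e : x - y = (x - prox x) - (y - prox y) + (prox x - prox y) := by module
    rw [e, inner_add_left, inner_sub_left, real_inner_self_eq_norm_sq]
    rw [e1] at hAB
    linarith
  have hnonexp : ∀ x y, ‖prox x - prox y‖ ≤ ‖x - y‖ := by
    intro x y
    have h1 := hfirm x y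
    have h2 := real_inner_le_norm (x - y) (prox x - prox y)
    rcases eq_or_lt_of_le (norm_nonneg (prox x - prox y)) with h | h
    · rw [← h]; exact norm_nonneg _
    · nlinarith
  have hproxlip : LipschitzWith 1 prox := by
    refine LipschitzWith.of_dist_le_mul fun x y => ?_
    rw [dist_eq_norm, dist_eq_norm, NNReal.coe_one, one_mul]
    exact hnonexp x y
  have hcont : Continuous fun x => (1 / t) • (x - prox x) :=
    (continuous_id.sub hproxlip.continuous).const_smul (1 / t)
  -- upper quadratic bound
  have haux : ∀ x u : EuclideanSpace ℝ (Fin m),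
      env u - env x - ⟪(1 / t) • (x - prox x), u - x⟫ ≤ (1 / (2 * t)) * ‖u - x‖ ^ 2 := by
    intro x u
    have hmin := hprox u (Set.mem_univ (prox x))
    simp only [Set.mem_univ] at hmin
    have hEu : env u ≤ f (prox x) + (1 / (2 * t)) * ‖prox x - u‖ ^ 2 := by
      rw [henv u]; exact hmin
    have hnorm : ‖prox x - u‖ ^ 2
        = ‖prox x - x‖ ^ 2 + 2 * ⟪prox x - x, x - u⟫ + ‖x - u‖ ^ 2 := by
      have h1 : prox x - u = (prox x - x) + (x - u) := by module
      rw [h1, norm_add_sq_real]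
    have hg : ⟪(1 / t) • (x - prox x), u - x⟫ = (1 / t) * ⟪prox x - x, x - u⟫ := by
      rw [real_inner_smul_left]
      congr 1
      rw [← inner_neg_neg]
      congr 1 <;> module
    have hxu : ‖x - u‖ = ‖u - x‖ := norm_sub_rev x u
    rw [henv x, hg]
    rw [hnorm, hxu] at hEu
    have h2t : (1 / (2 * t)) * 2 = 1 / t := by field_simp
    nlinarith [hEu]
  -- two-sided bound
  have hbound : ∀ x u : EuclideanSpace ℝ (Fin m),
      |env u - env x - ⟪(1 / t) • (x - prox x), u - x⟫| ≤ (3 / t) * ‖u - x‖ ^ 2 := by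
    intro x u
    have hup := haux x u
    have hdown := haux u x
    have hswap : ⟪(1 / t) • (u - prox u), x - u⟫
        = - ⟪(1 / t) • (u - prox u), u - x⟫ := by
      rw [← inner_neg_right]; congr 1; module
    rw [hswap] at hdown
    have hdiff : ⟪(1 / t) • (u - prox u), u - x⟫ - ⟪(1 / t) • (x - prox x), u - x⟫
        = ⟪(1 / t) • ((u - x) - (prox u - prox x)), u - x⟫ := by
      rw [← inner_sub_left]; congr 1; module
    have hnormdiff : ‖(1 / t) • ((u - x) - (prox u - prox x))‖ ≤ (2 / t) * ‖u - x‖ := by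
      rw [norm_smul, Real.norm_eq_abs, abs_of_pos ht']
      have h1 : ‖(u - x) - (prox u - prox x)‖ ≤ ‖u - x‖ + ‖prox u - prox x‖ :=
        norm_sub_le _ _
      have h2 := hnonexp u x
      have : ‖(u - x) - (prox u - prox x)‖ ≤ 2 * ‖u - x‖ := by linarith
      calc (1 / t) * ‖(u - x) - (prox u - prox x)‖ ≤ (1 / t) * (2 * ‖u - x‖) := by
            exact mul_le_mul_of_nonneg_left this (le_of_lt ht')
        _ = (2 / t) * ‖u - x‖ := by ring
    have hcs : |⟪(1 / t) • ((u - x) - (prox u - prox x)), u - x⟫| ≤ (2 / t) * ‖u - x‖ ^ 2 := by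
      calc |⟪(1 / t) • ((u - x) - (prox u - prox x)), u - x⟫|
          ≤ ‖(1 / t) • ((u - x) - (prox u - prox x))‖ * ‖u - x‖ := abs_real_inner_le_norm _ _
        _ ≤ ((2 / t) * ‖u - x‖) * ‖u - x‖ :=
            mul_le_mul_of_nonneg_right hnormdiff (norm_nonneg _)
        _ = (2 / t) * ‖u - x‖ ^ 2 := by ring
    have hxu : ‖x - u‖ = ‖u - x‖ := norm_sub_rev x u
    rw [hxu] at hdown
    rw [abs_le]
    have habs := abs_le.mp hcs
    have h12 : (1 / (2 * t)) ≤ 3 / t := by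
      rw [div_le_div_iff₀ (by positivity) ht]; nlinarith
    have h23 : (2 / t) + (1 / (2 * t)) ≤ 3 / t := by
      rw [div_add_div _ _ (by positivity : (t:ℝ) ≠ 0) (by positivity : (2*t:ℝ) ≠ 0)]
      rw [div_le_div_iff₀ (by positivity) ht]; nlinarith
    have hn2 : (0:ℝ) ≤ ‖u - x‖ ^ 2 := by positivity
    constructor
    · -- lower: env u - env x - ⟪g, u-x⟫ ≥ (inner diff) - quadratic
      have : env u - env x - ⟪(1 / t) • (x - prox x), u - x⟫
          ≥ (⟪(1 / t) • (u - prox u), u - x⟫ - ⟪(1 / t) • (x - prox x), u - x⟫)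
            - (1 / (2 * t)) * ‖u - x‖ ^ 2 := by linarith
      rw [hdiff] at this
      nlinarith [habs.1]
    · nlinarith [hup]
  refine ⟨?_, fun x => ?_, hcont⟩
  · -- convexity
    refine ⟨convex_univ, fun x1 _ x2 _ a b ha hb hab => ?_⟩
    set z := a • x1 + b • x2 with hz
    set w := a • prox x1 + b • prox x2 with hw
    have hmin := hprox z (Set.mem_univ w)
    simp only [Set.mem_univ] at hmin
    have hEz : env z ≤ f w + (1 / (2 * t)) * ‖w - z‖ ^ 2 := by
      rw [henv z]; exact hmin
    have hfw : f w ≤ a * f (prox x1) + b * f (prox x2) :=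
      hconv.2 (Set.mem_univ _) (Set.mem_univ _) ha hb hab
    have hwz : w - z = a • (prox x1 - x1) + b • (prox x2 - x2) := by
      rw [hw, hz]; module
    have hnorm : ‖w - z‖ ^ 2 ≤ a * ‖prox x1 - x1‖ ^ 2 + b * ‖prox x2 - x2‖ ^ 2 := by
      have h1 : ‖w - z‖ ≤ a * ‖prox x1 - x1‖ + b * ‖prox x2 - x2‖ := by
        rw [hwz]
        refine (norm_add_le _ _).trans ?_
        rw [norm_smul, norm_smul, Real.norm_eq_abs, Real.norm_eq_abs,
          abs_of_nonneg ha, abs_of_nonneg hb]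
      have h2 : ‖w - z‖ ^ 2 ≤ (a * ‖prox x1 - x1‖ + b * ‖prox x2 - x2‖) ^ 2 :=
        pow_le_pow_left₀ (norm_nonneg _) h1 2
      have h3 := (Even.convexOn_pow (even_two)).2
        (Set.mem_univ ‖prox x1 - x1‖) (Set.mem_univ ‖prox x2 - x2‖) ha hb hab
      simp only [smul_eq_mul] at h3
      linarith
    have ht2 : 0 < 1 / (2 * t) := by positivity
    rw [henv x1, henv x2]
    calc env z ≤ f w + (1 / (2 * t)) * ‖w - z‖ ^ 2 := hEz
      _ ≤ (a * f (prox x1) + b * f (prox x2))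
          + (1 / (2 * t)) * (a * ‖prox x1 - x1‖ ^ 2 + b * ‖prox x2 - x2‖ ^ 2) := by
          have := mul_le_mul_of_nonneg_left hnorm (le_of_lt ht2)
          linarith
      _ = a * (f (prox x1) + 1 / (2 * t) * ‖prox x1 - x1‖ ^ 2)
          + b * (f (prox x2) + 1 / (2 * t) * ‖prox x2 - x2‖ ^ 2) := by ring
  · -- gradient
    rw [hasGradientAt_iff_isLittleO, Asymptotics.isLittleO_iff]
    intro c hc
    have hr : 0 < c * t / 3 := by positivity
    filter_upwards [Metric.ball_mem_nhds x hr] with u hu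
    rw [Metric.mem_ball, dist_eq_norm] at hu
    have hb2 := hbound x u
    rw [Real.norm_eq_abs]
    have h1 : (3 / t) * ‖u - x‖ ^ 2 ≤ c * ‖u - x‖ := by
      rw [div_mul_eq_mul_div, div_le_iff₀ ht]
      nlinarith [mul_le_mul_of_nonneg_left (le_of_lt hu) (norm_nonneg (u - x))]
    linarith
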